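/- Let A = (a_{nk}) be a real infinite matrix with Σ_k |a_{nk}| < ∞ for all n and lim Σ_k a_{nk} = 1 (ordinary limit). Define the family A' = ((a_{nk}^{(i)}))_{i∈ℕ₀} by a_{nk}^{(i)} = a_{n,k−i} for k > i and 0 for k ≤ i. If a bounded real sequence s = (s_n) is A'-summable to a with respect to the ideal I_f of finite sets (i.e., Σ_k a_{nk}^{(i)} s_k → a as n → ∞ uniformly in i ∈ ℕ₀), then s is almost convergent to a, i.e., L(s) = a for every Banach limit L on ℓ^∞. -/

import Mathlib

/-- An ideal on ℕ: nonempty collection of subsets, not containing ℕ,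
closed under subsets and finite unions. -/
def IsIdeal (I : Set (Set ℕ)) : Prop :=
  I.Nonempty ∧ Set.univ ∉ I ∧ (∀ A ∈ I, ∀ B, B ⊆ A → B ∈ I) ∧ ∀ A ∈ I, ∀ B ∈ I, A ∪ B ∈ I

/-- Convergence of `g n i` to `g0 i` along the ideal `I`, uniformly in `i ∈ S`. -/
def UnifConvAlong {S : Type*} (I : Set (Set ℕ)) (g : ℕ → S → ℝ) (g0 : S → ℝ) : Prop :=
  ∀ ε > 0, ∃ E ∈ I, ∀ i : S, {n : ℕ | ε ≤ |g n i - g0 i|} ⊆ E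

/-- The collection `J_{B,I}` of sets `K ⊆ ℕ` whose matrix transforms tend to 0 along `I`
uniformly in `i ∈ S`. -/
def matIdeal {S : Type*} (I : Set (Set ℕ)) (b : S → ℕ → ℕ → ℝ) : Set (Set ℕ) :=
  {K : Set ℕ | UnifConvAlong I (fun n i => ∑' k, b i n k * K.indicator 1 k) (fun _ => 0)}

/-- `I`-limit superior of a real sequence. -/
noncomputable def idealLimSup (I : Set (Set ℕ)) (s : ℕ → ℝ) : ℝ :=
  sSup {t : ℝ | {n : ℕ | t < s n} ∉ I}

/-- `I`-limit inferior of a real sequence. -/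
noncomputable def idealLimInf (I : Set (Set ℕ)) (s : ℕ → ℝ) : ℝ :=
  sInf {t : ℝ | {n : ℕ | s n < t} ∉ I}

/-- `I`-convergence of a real sequence to `a`. -/
def IdealConv (I : Set (Set ℕ)) (s : ℕ → ℝ) (a : ℝ) : Prop :=
  ∀ ε > 0, {n : ℕ | ε ≤ |s n - a|} ∈ I

/-- `B^I`-statistical convergence of `s` to `a`. -/
def BStatConv {S : Type*} (I : Set (Set ℕ)) (b : S → ℕ → ℕ → ℝ) (s : ℕ → ℝ) (a : ℝ) : Prop :=
  ∀ ε > 0, UnifConvAlong I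
    (fun n i => ∑' k, b i n k * Set.indicator {k : ℕ | ε ≤ |s k - a|} 1 k) (fun _ => 0)

set_option maxHeartbeats 2000000 in
set_option synthInstance.maxHeartbeats 400000 in
/-- If a bounded sequence `s` is `A'`-summable to `a` (uniformly in the shift parameter
`i`), where `A'` arises by shifting the regular matrix `A`, then `s` is almost convergent
to `a`, i.e. every Banach limit maps it to `a`. -/
theorem stmt16 (A : ℕ → ℕ → ℝ) (habs : ∀ n, Summable fun k => |A n k|)
    (hreg : Filter.Tendsto (fun n => ∑' k, A n k) Filter.atTop (nhds 1))
    (s : ℕ → ℝ) (hs : Memℓp s ⊤) (a : ℝ)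
    (hsum : ∀ ε > (0 : ℝ), ∃ N : ℕ, ∀ n ≥ N, ∀ i : ℕ,
      |(∑' k, A n k * s (k + i)) - a| < ε)
    (L : lp (fun _ : ℕ => ℝ) ⊤ →ₗ[ℝ] ℝ)
    (hpos : ∀ x : lp (fun _ : ℕ => ℝ) ⊤, (∀ n, 0 ≤ x n) → 0 ≤ L x)
    (hshift : ∀ x y : lp (fun _ : ℕ => ℝ) ⊤, (∀ n, y n = x (n + 1)) → L y = L x)
    (hone : ∀ o : lp (fun _ : ℕ => ℝ) ⊤, (∀ n, o n = 1) → L o = 1) :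
    L ⟨s, hs⟩ = a := by
    classical
  set E := lp (fun _ : ℕ => ℝ) ⊤ with hE
  set S : E := ⟨s, hs⟩ with hS
  set M : ℝ := ‖S‖ with hM
  have hMs : ∀ j, |s j| ≤ M := fun j => by
    simpa [Real.norm_eq_abs] using lp.norm_apply_le_norm ENNReal.top_ne_zero S j
  -- constant one
  have hcsmul : ∀ (c : ℝ) (f : E) (n : ℕ), ((c • f : E) : ∀ _ : ℕ, ℝ) n = c * f n := by
    intro c f n
    have := congrFun (lp.coeFn_smul c f) n
    rw [Pi.smul_apply, smul_eq_mul] at this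
    exact this
  have hcsub : ∀ (f g : E) (n : ℕ), ((f - g : E) : ∀ _ : ℕ, ℝ) n = f n - g n := by
    intro f g n
    have := congrFun (lp.coeFn_sub f g) n
    simpa using this
  have hcaddE : ∀ (f g : E) (n : ℕ), ((f + g : E) : ∀ _ : ℕ, ℝ) n = f n + g n := by
    intro f g n
    have := congrFun (lp.coeFn_add f g) n
    simpa using this
  have hone_mem : Memℓp (fun _ : ℕ => (1 : ℝ)) ⊤ :=
    memℓp_infty ⟨1, by rintro x ⟨i, rfl⟩; simp⟩
  set one : E := ⟨fun _ => 1, hone_mem⟩ with hone_def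
  have hL1 : L one = 1 := hone one fun n => rfl
  -- boundedness of L
  have hLb : ∀ x : E, |L x| ≤ ‖x‖ := by
    intro x
    have hx : ∀ i, |x i| ≤ ‖x‖ := fun i => by
      simpa [Real.norm_eq_abs] using lp.norm_apply_le_norm ENNReal.top_ne_zero x i
    have h1 : 0 ≤ L (‖x‖ • one - x) := by
      apply hpos
      intro n
      rw [hcsub, hcsmul]
      have hco : (one : ∀ _ : ℕ, ℝ) n = 1 := rfl
      rw [hco, mul_one]
      have := (abs_le.mp (hx n)).2
      linarith
    have h2 : 0 ≤ L (‖x‖ • one + x) := by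
      apply hpos
      intro n
      rw [hcaddE, hcsmul]
      have hco : (one : ∀ _ : ℕ, ℝ) n = 1 := rfl
      rw [hco, mul_one]
      have := (abs_le.mp (hx n)).1
      linarith
    rw [map_sub, map_smul, hL1] at h1
    rw [map_add, map_smul, hL1] at h2
    simp only [smul_eq_mul, mul_one] at h1 h2
    rw [abs_le]; constructor <;> linarith
  -- continuous version of L
  set L' : E →L[ℝ] ℝ := LinearMap.mkContinuous L 1 (fun x => by
    simpa [Real.norm_eq_abs] using hLb x) with hL'
  have hL'eq : ∀ x : E, L' x = L x := fun x => rfl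
  -- shifted sequences
  have hsh_mem : ∀ k : ℕ, Memℓp (fun i => s (i + k)) ⊤ := by
    intro k
    apply memℓp_infty
    refine ⟨M, ?_⟩
    rintro x ⟨i, rfl⟩
    simpa [Real.norm_eq_abs] using hMs (i + k)
  set sh : ℕ → E := fun k => ⟨fun i => s (i + k), hsh_mem k⟩ with hsh_def
  have hshnorm : ∀ k, ‖sh k‖ ≤ M := by
    intro k
    apply lp.norm_le_of_forall_le (le_trans (abs_nonneg (s 0)) (hMs 0))
    intro i
    simpa [Real.norm_eq_abs, hsh_def] using hMs (i + k)
  have hLsh : ∀ k, L (sh k) = L S := by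
    intro k
    induction k with
    | zero =>
      have h0 : sh 0 = S := by
        apply Subtype.ext
        funext i
        simp [hsh_def, hS]
      rw [h0]
    | succ k ih =>
      rw [← ih]
      apply hshift (sh k) (sh (k + 1))
      intro n
      have hnk : n + (k + 1) = (n + 1) + k := by omega
      show s (n + (k + 1)) = s ((n + 1) + k)
      rw [hnk]
  -- evaluation maps
  have heval : ∀ i : ℕ, ∃ ev : E →L[ℝ] ℝ, ∀ x : E, ev x = x i := by
    intro i
    refine ⟨LinearMap.mkContinuous
      { toFun := fun x : E => x i
        map_add' := fun x y => by
          have := lp.coeFn_add x y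
          exact congrFun this i
        map_smul' := fun c x => by
          simp only [RingHom.id_apply, smul_eq_mul]
          exact hcsmul c x i } 1
      (fun x => by
        simpa using lp.norm_apply_le_norm ENNReal.top_ne_zero x i), fun x => rfl⟩
  -- main estimate
  have key : ∀ ε > (0 : ℝ), ∃ N : ℕ, ∀ n ≥ N, |(∑' k, A n k) * L S - a| ≤ ε := by
    intro ε hε
    obtain ⟨N, hN⟩ := hsum ε hε
    refine ⟨N, fun n hn => ?_⟩
    -- summability in E
    have hsumE : Summable fun k => A n k • sh k := by
      apply Summable.of_norm
      refine Summable.of_nonneg_of_le (fun k => norm_nonneg _) (fun k => ?_)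
        ((habs n).mul_right M)
      rw [norm_smul, Real.norm_eq_abs]
      exact mul_le_mul_of_nonneg_left (hshnorm k) (abs_nonneg _)
    set T : E := ∑' k, A n k • sh k with hT
    have hTi : ∀ i : ℕ, T i = ∑' k, A n k * s (k + i) := by
      intro i
      obtain ⟨ev, hev⟩ := heval i
      rw [← hev]
      rw [hT, ev.map_tsum hsumE]
      congr 1
      funext k
      rw [map_smul, hev]
      show A n k • (s (i + k)) = A n k * s (k + i)
      rw [smul_eq_mul, add_comm i k]
    have hLT : L' T = (∑' k, A n k) * L S := by
      rw [hT, L'.map_tsum hsumE]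
      have : ∀ k, L' (A n k • sh k) = A n k * L S := by
        intro k
        rw [map_smul, smul_eq_mul, hL'eq, hLsh k]
      simp_rw [this]
      exact tsum_mul_right
    have hnorm : ‖T - a • one‖ ≤ ε := by
      apply lp.norm_le_of_forall_le hε.le
      intro i
      rw [Real.norm_eq_abs, hcsub, hcsmul]
      have hco : (one : ∀ _ : ℕ, ℝ) i = 1 := rfl
      rw [hco, mul_one, hTi i]
      exact (hN n hn i).le
    have habs2 : |L' (T - a • one)| ≤ ε := by
      calc |L' (T - a • one)| ≤ ‖T - a • one‖ := hLb _
        _ ≤ ε := hnorm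
    rw [map_sub, map_smul, smul_eq_mul, hLT, hL'eq one, hL1, mul_one] at habs2
    exact habs2
  -- conclude
  have hfinal : ∀ ε > (0 : ℝ), |L S - a| ≤ ε := by
    intro ε hε
    obtain ⟨N, hN⟩ := key (ε / 2) (by linarith)
    set δ : ℝ := ε / 2 / (|L S| + 1) with hδdef
    have hδ : 0 < δ := by positivity
    obtain ⟨N', hN'⟩ := Metric.tendsto_atTop.mp hreg δ hδ
    set n := max N N' with hn
    have h1 := hN n (le_max_left _ _)
    have h2 := hN' n (le_max_right _ _)
    rw [Real.dist_eq] at h2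
    have h3 : |L S - (∑' k, A n k) * L S| ≤ ε / 2 := by
      have : L S - (∑' k, A n k) * L S = (1 - (∑' k, A n k)) * L S := by ring
      rw [this, abs_mul]
      have hb : |1 - (∑' k, A n k)| ≤ δ := by
        rw [abs_sub_comm]; exact h2.le
      calc |1 - (∑' k, A n k)| * |L S| ≤ δ * (|L S| + 1) := by
            apply mul_le_mul hb (by linarith [abs_nonneg (L S)]) (abs_nonneg _)
            exact hδ.le
        _ = ε / 2 := by
            have hpos1 : |L S| + 1 ≠ 0 := by positivity
            rw [hδdef]
            field_simp
    calc |L S - a| ≤ |L S - (∑' k, A n k) * L S| + |(∑' k, A n k) * L S - a| :=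
          abs_sub_le _ _ _
      _ ≤ ε / 2 + ε / 2 := add_le_add h3 h1
      _ = ε := by ring
  have : dist (L S) a = |L S - a| := Real.dist_eq _ _
  have := eq_of_forall_dist_le (fun ε hε => by rw [Real.dist_eq]; exact hfinal ε hε)
  exact this
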